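/- Let D be a compact convex nonempty subset of ℝⁿ and C a compact convex nonempty subset of D. Then C is an extremal point of the convex algebra K(D) of compact convex nonempty subsets of D (with Minkowski operations) if and only if C is an extremal point of the larger convex algebra Pc(D) of all nonempty convex subsets of D. -/

import Mathlib

open Set Filter Topology Module
open scoped RealInnerProductSpace

variable {E : Type*} [NormedAddCommGroup E] [InnerProductSpace ℝ E] [FiniteDimensional ℝ E]

/-- Supporting hyperplane at a point `z` of a compact convex set `C` from which one
cannot move inside `C` in direction `v ∈ vectorSpan ℝ C`. -/
lemma exists_support {C : Set E} (hCcp : IsCompact C) (hCcv : Convex ℝ C)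
    {z v : E} (hz : z ∈ C) (hv : v ∈ vectorSpan ℝ C) (hv0 : v ≠ 0)
    (hout : ∀ δ : ℝ, 0 < δ → z + δ • v ∉ C) :
    ∃ u : E, u ∈ vectorSpan ℝ C ∧ ‖u‖ = 1 ∧ ∀ x ∈ C, ⟪u, x⟫ ≤ ⟪u, z⟫ := by
  set V := vectorSpan ℝ C with hV
  -- Step A: approximate supporting functionals
  have hstep : ∀ k : ℕ, ∃ u : E, u ∈ V ∧ ‖u‖ = 1 ∧
      ∀ x ∈ C, ⟪u, x - z⟫ ≤ ((k : ℝ) + 1)⁻¹ * ‖v‖ := by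
    intro k
    set δ : ℝ := ((k : ℝ) + 1)⁻¹ with hδdef
    have hδ : 0 < δ := by positivity
    obtain ⟨f, s, hfs, hsep⟩ :=
      geometric_hahn_banach_point_closed hCcv hCcp.isClosed (hout δ hδ)
    set w : E := (InnerProductSpace.toDual ℝ E).symm f with hw
    have hwf : ∀ x : E, ⟪w, x⟫ = f x := fun x =>
      InnerProductSpace.toDual_symm_apply
    have hkey : ∀ x ∈ C, δ * ⟪w, v⟫ < ⟪w, x - z⟫ := by
      intro x hx
      have h1 : f (z + δ • v) < f x := lt_trans hfs (hsep x hx)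
      have : f z + δ * f v < f x := by
        simpa [map_add, map_smul, smul_eq_mul] using h1
      have := this
      rw [← hwf z, ← hwf v, ← hwf x] at this
      rw [inner_sub_right]
      linarith
    have hwv : ⟪w, v⟫ < 0 := by
      have := hkey z hz
      simp only [sub_self, inner_zero_right] at this
      nlinarith
    set w' : E := (V.orthogonalProjectionOnto w : E) with hw'
    have hw'mem : w' ∈ V := (V.orthogonalProjectionOnto w).2
    have hinner : ∀ y ∈ V, ⟪w', y⟫ = ⟪w, y⟫ := by
      intro y hy
      have horth : w - w' ∈ Vᗮ := Submodule.sub_starProjection_mem_orthogonal (K := V) w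
      have h0 : ⟪y, w - w'⟫ = (0:ℝ) := horth y hy
      rw [inner_sub_right] at h0
      rw [← real_inner_comm w' y, ← real_inner_comm w y]
      linarith
    have hw'v : ⟪w', v⟫ < 0 := by rw [hinner v hv]; exact hwv
    have hw'0 : w' ≠ 0 := by
      intro h; rw [h, inner_zero_left] at hw'v; linarith
    have hnw' : (0:ℝ) < ‖w'‖ := norm_pos_iff.2 hw'0
    refine ⟨-(‖w'‖⁻¹ • w'), V.neg_mem (V.smul_mem _ hw'mem), ?_, ?_⟩
    · rw [norm_neg, norm_smul, norm_inv, norm_norm, inv_mul_cancel₀ hnw'.ne']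
    · intro x hx
      have hxz : x - z ∈ V := by
        have := vsub_mem_vectorSpan ℝ hx hz
        simpa [vsub_eq_sub] using this
      have h2 : δ * ⟪w', v⟫ < ⟪w', x - z⟫ := by
        rw [hinner _ hxz, hinner v hv]; exact hkey x hx
      have hcs : ⟪-(‖w'‖⁻¹ • w'), v⟫ ≤ ‖v‖ := by
        calc ⟪-(‖w'‖⁻¹ • w'), v⟫ ≤ ‖-(‖w'‖⁻¹ • w')‖ * ‖v‖ := real_inner_le_norm _ _
          _ = ‖v‖ := by
              rw [norm_neg, norm_smul, norm_inv, norm_norm, inv_mul_cancel₀ hnw'.ne', one_mul]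
      have hrw : ⟪-(‖w'‖⁻¹ • w'), x - z⟫ = -(‖w'‖⁻¹ * ⟪w', x - z⟫) := by
        rw [inner_neg_left, real_inner_smul_left]
      have hrw2 : ⟪-(‖w'‖⁻¹ • w'), v⟫ = -(‖w'‖⁻¹ * ⟪w', v⟫) := by
        rw [inner_neg_left, real_inner_smul_left]
      rw [hrw]
      have : -(‖w'‖⁻¹ * ⟪w', x - z⟫) ≤ δ * (-(‖w'‖⁻¹ * ⟪w', v⟫)) := by
        have hinv : (0:ℝ) < ‖w'‖⁻¹ := by positivity
        nlinarith
      calc -(‖w'‖⁻¹ * ⟪w', x - z⟫) ≤ δ * (-(‖w'‖⁻¹ * ⟪w', v⟫)) := this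
        _ = δ * ⟪-(‖w'‖⁻¹ • w'), v⟫ := by rw [hrw2]
        _ ≤ δ * ‖v‖ := by
            have := hcs
            nlinarith [hδ]
  choose us h1 h2 h3 using hstep
  have hVclosed : IsClosed (V : Set E) := Submodule.closed_of_finiteDimensional V
  have hK : IsCompact ((V : Set E) ∩ Metric.sphere 0 1) :=
    (isCompact_sphere (0:E) 1).inter_left hVclosed
  have hmem : ∀ k, us k ∈ (V : Set E) ∩ Metric.sphere 0 1 := fun k =>
    ⟨h1 k, by simp [mem_sphere_iff_norm, h2 k]⟩
  obtain ⟨u, hu, φ, hφ, hφt⟩ := hK.tendsto_subseq hmem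
  refine ⟨u, hu.1, by simpa [mem_sphere_iff_norm] using hu.2, ?_⟩
  intro x hx
  have hlim : Tendsto (fun k => ⟪us (φ k), x - z⟫) atTop (𝓝 ⟪u, x - z⟫) :=
    hφt.inner tendsto_const_nhds
  have hb : Tendsto (fun k => ((φ k : ℝ) + 1)⁻¹ * ‖v‖) atTop (𝓝 0) := by
    have h0 : Tendsto (fun m : ℕ => ((m : ℝ) + 1)⁻¹) atTop (𝓝 0) := by
      simpa only [one_div] using tendsto_one_div_add_atTop_nhds_zero_nat (𝕜 := ℝ)
    have := (h0.comp hφ.tendsto_atTop).mul_const ‖v‖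
    simpa using this
  have hle : ⟪u, x - z⟫ ≤ 0 :=
    le_of_tendsto_of_tendsto' hlim hb (fun k => h3 (φ k) x hx)
  rw [inner_sub_right] at hle
  linarith

/-- Key lemma: if `A`, `B` are convex subsets of a compact convex set `C` with
`p•A + (1-p)•B = C`, then `C ⊆ A`. Proof by induction on the dimension of `C`. -/
lemma key_subset : ∀ d : ℕ, ∀ C A B : Set E, IsCompact C → Convex ℝ C →
    A ⊆ C → Convex ℝ A → B ⊆ C → ∀ p : ℝ, 0 < p → p < 1 →
    Set.image2 (fun a b => p • a + (1-p) • b) A B = C →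
    finrank ℝ (vectorSpan ℝ C) ≤ d → C ⊆ A := by
  intro d
  induction d using Nat.strong_induction_on with
  | _ d IH =>
    intro C A B hCcp hCcv hAC hAcv hBC p hp0 hp1 himg hd c hc
    obtain ⟨a, ha, b, hb, heq⟩ := Set.mem_image2.1 (himg ▸ hc)
    by_cases hac : a = c
    · exact hac ▸ ha
    -- the direction of the chord
    set v : E := c - a with hvdef
    have hv0 : v ≠ 0 := sub_ne_zero.2 (Ne.symm hac)
    have hvV : v ∈ vectorSpan ℝ C := by
      have := vsub_mem_vectorSpan ℝ hc (hAC ha)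
      simpa [vsub_eq_sub] using this
    -- extend the chord maximally
    set S : Set ℝ := {t : ℝ | a + t • v ∈ C} with hSdef
    have hSclosed : IsClosed S := hCcp.isClosed.preimage (by fun_prop)
    have h1S : (1:ℝ) ∈ S := by
      simp only [hSdef, mem_setOf_eq, one_smul, hvdef]
      simpa using hc
    obtain ⟨R, hR⟩ := hCcp.isBounded.exists_norm_le
    have hvnorm : (0:ℝ) < ‖v‖ := norm_pos_iff.2 hv0
    have hbdd : BddAbove S := by
      refine ⟨(R + ‖a‖) / ‖v‖, fun t ht => ?_⟩
      have h1 : ‖a + t • v‖ ≤ R := hR _ ht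
      have h2 : ‖t • v‖ ≤ R + ‖a‖ := by
        have h3 : t • v = (a + t • v) - a := by abel
        rw [h3]
        calc ‖(a + t • v) - a‖ ≤ ‖a + t • v‖ + ‖a‖ := norm_sub_le _ _
          _ ≤ R + ‖a‖ := by linarith
      rw [norm_smul, Real.norm_eq_abs] at h2
      rw [le_div_iff₀ hvnorm]
      nlinarith [mul_le_mul_of_nonneg_right (le_abs_self t) (norm_nonneg v)]
    set T : ℝ := sSup S with hTdef
    have hTS : T ∈ S := hSclosed.csSup_mem ⟨1, h1S⟩ hbdd
    have hT1 : 1 ≤ T := le_csSup hbdd h1S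
    set z : E := a + T • v with hzdef
    have hzC : z ∈ C := hTS
    have hout : ∀ δ : ℝ, 0 < δ → z + δ • v ∉ C := by
      intro δ hδ hmem
      have hTδ : T + δ ∈ S := by
        simp only [hSdef, mem_setOf_eq, add_smul]
        rw [← add_assoc]
        exact hmem
      have := le_csSup hbdd hTδ
      linarith
    -- supporting hyperplane at `z`
    obtain ⟨u, huV, hunorm, hsupp⟩ := exists_support hCcp hCcv hzC hvV hv0 hout
    set M : ℝ := ⟪u, z⟫ with hMdef
    set F : Set E := C ∩ {x | ⟪u, x⟫ = M} with hFdef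
    have hFC : F ⊆ C := inter_subset_left
    have hzF : z ∈ F := ⟨hzC, rfl⟩
    have hFcp : IsCompact F := hCcp.inter_right (isClosed_eq (Continuous.inner continuous_const continuous_id) continuous_const)
    have hFcv : Convex ℝ F := by
      refine hCcv.inter ?_
      have : {x : E | ⟪u, x⟫ = M} = (innerSL ℝ u) ⁻¹' {M} := rfl
      rw [this]
      exact (convex_singleton M).linear_preimage (innerSL ℝ u).toLinearMap
    -- decomposition of points of `F`
    have hdecomp : ∀ y ∈ F, ∃ a' ∈ A ∩ F, ∃ b' ∈ B ∩ F,
        p • a' + (1-p) • b' = y := by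
      rintro y ⟨hyC, hyM⟩
      obtain ⟨a', ha', b', hb', heq'⟩ := Set.mem_image2.1 (himg ▸ hyC)
      have hia : ⟪u, a'⟫ ≤ M := hsupp a' (hAC ha')
      have hib : ⟪u, b'⟫ ≤ M := hsupp b' (hBC hb')
      have hsum : p * ⟪u, a'⟫ + (1-p) * ⟪u, b'⟫ = M := by
        have : ⟪u, p • a' + (1-p) • b'⟫ = M := by rw [heq']; exact hyM
        rwa [inner_add_right, real_inner_smul_right, real_inner_smul_right] at this
      have hEa : ⟪u, a'⟫ = M := by nlinarith
      have hEb : ⟪u, b'⟫ = M := by nlinarith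
      exact ⟨a', ⟨ha', hAC ha', hEa⟩, b', ⟨hb', hBC hb', hEb⟩, heq'⟩
    have himgF : Set.image2 (fun a b => p • a + (1-p) • b) (A ∩ F) (B ∩ F) = F := by
      apply Subset.antisymm
      · rintro _ ⟨a', ⟨haA, _, haM⟩, b', ⟨hbB, _, hbM⟩, rfl⟩
        refine ⟨himg ▸ Set.mem_image2_of_mem haA hbB, ?_⟩
        have h₁ : ⟪u, a'⟫ = M := haM
        have h₂ : ⟪u, b'⟫ = M := hbM
        simp only [mem_setOf_eq, inner_add_right, real_inner_smul_right, h₁, h₂]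
        ring
      · intro y hy
        obtain ⟨a', ha', b', hb', heq'⟩ := hdecomp y hy
        exact Set.mem_image2.2 ⟨a', ha', b', hb', heq'⟩
    -- dimension drop
    have hFle : vectorSpan ℝ F ≤ vectorSpan ℝ C := vectorSpan_mono ℝ hFC
    have huF : u ∉ vectorSpan ℝ F := by
      intro hmem
      have hker : ∀ y ∈ vectorSpan ℝ F, ⟪u, y⟫ = (0:ℝ) := by
        intro y hy
        induction hy using Submodule.span_induction with
        | mem y hy =>
          obtain ⟨y₁, hy₁, y₂, hy₂, rfl⟩ := hy
          have h₁ : ⟪u, y₁⟫ = M := hy₁.2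
          have h₂ : ⟪u, y₂⟫ = M := hy₂.2
          show ⟪u, y₁ - y₂⟫ = (0:ℝ)
          rw [inner_sub_right, h₁, h₂, sub_self]
        | zero => exact inner_zero_right u
        | add y₁ y₂ _ _ ih₁ ih₂ => rw [inner_add_right, ih₁, ih₂, add_zero]
        | smul r y _ ih => rw [real_inner_smul_right, ih, mul_zero]
      have := hker u hmem
      rw [real_inner_self_eq_norm_sq, hunorm] at this
      norm_num at this
    have hlt : vectorSpan ℝ F < vectorSpan ℝ C :=
      lt_of_le_of_ne hFle (fun h => huF (h ▸ huV))
    have hdrop : finrank ℝ (vectorSpan ℝ F) < finrank ℝ (vectorSpan ℝ C) :=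
      Submodule.finrank_lt_finrank_of_lt hlt
    -- apply the induction hypothesis on the face `F`
    have hFA : F ⊆ A ∩ F :=
      IH (finrank ℝ (vectorSpan ℝ F)) (lt_of_lt_of_le hdrop hd) F (A ∩ F) (B ∩ F)
        hFcp hFcv inter_subset_right (hAcv.inter hFcv) inter_subset_right
        p hp0 hp1 himgF le_rfl
    have hzA : z ∈ A := (hFA hzF).1
    -- conclude: `c` lies on the segment from `a` to `z`
    have hT0 : T ≠ 0 := by linarith
    have hcoef : (1 - T⁻¹) + T⁻¹ = 1 := by ring
    have hc1 : (0:ℝ) ≤ 1 - T⁻¹ := by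
      have : T⁻¹ ≤ 1 := by
        rw [inv_le_one_iff₀]; right; linarith
      linarith
    have hc2 : (0:ℝ) ≤ T⁻¹ := by positivity
    have := hAcv ha hzA hc1 hc2 hcoef
    have hpt : (1 - T⁻¹) • a + T⁻¹ • z = c := by
      rw [hzdef, smul_add, smul_smul, inv_mul_cancel₀ hT0, one_smul, hvdef]
      module
    rwa [hpt] at this


/-- for `D` compact convex nonempty in `ℝⁿ` and `C` a compact convex
nonempty subset of `D`, `C` is an extremal point of the convex algebra `K(D)` of
compact convex nonempty subsets of `D` (with Minkowski operations) iff it is an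
extremal point of the convex algebra `Pc(D)` of all nonempty convex subsets of `D`. -/
theorem extremal_K_iff_extremal_Pc {n : ℕ} (D : Set (EuclideanSpace ℝ (Fin n)))
    (hDcp : IsCompact D) (hDcv : Convex ℝ D) (hDne : D.Nonempty)
    (C : Set (EuclideanSpace ℝ (Fin n)))
    (hCD : C ⊆ D) (hCcp : IsCompact C) (hCcv : Convex ℝ C) (hCne : C.Nonempty) :
    (∀ A B : Set (EuclideanSpace ℝ (Fin n)),
        A ⊆ D → IsCompact A → Convex ℝ A → A.Nonempty →
        B ⊆ D → IsCompact B → Convex ℝ B → B.Nonempty →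
        ∀ p ∈ Set.Ioo (0:ℝ) 1,
          Set.image2 (fun a b => p • a + (1-p) • b) A B = C → A = C ∧ B = C)
    ↔
    (∀ A B : Set (EuclideanSpace ℝ (Fin n)),
        A ⊆ D → Convex ℝ A → A.Nonempty →
        B ⊆ D → Convex ℝ B → B.Nonempty →
        ∀ p ∈ Set.Ioo (0:ℝ) 1,
          Set.image2 (fun a b => p • a + (1-p) • b) A B = C → A = C ∧ B = C) := by
  constructor
  · intro hK A B hAD hAcv hAne hBD hBcv hBne p hp himg
    obtain ⟨hp0, hp1⟩ := hp
    have hDclosed : IsClosed D := hDcp.isClosed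
    -- closures are compact convex nonempty subsets of D
    have hcAD : closure A ⊆ D := closure_minimal hAD hDclosed
    have hcBD : closure B ⊆ D := closure_minimal hBD hDclosed
    have hcAcp : IsCompact (closure A) := hDcp.of_isClosed_subset isClosed_closure hcAD
    have hcBcp : IsCompact (closure B) := hDcp.of_isClosed_subset isClosed_closure hcBD
    -- the Minkowski combination of the closures is still C
    have hcont : Continuous (fun q : EuclideanSpace ℝ (Fin n) × EuclideanSpace ℝ (Fin n) =>
        p • q.1 + (1-p) • q.2) := by fun_prop
    have himgc : Set.image2 (fun a b => p • a + (1-p) • b) (closure A) (closure B) = C := by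
      apply Set.Subset.antisymm
      · calc Set.image2 (fun a b => p • a + (1-p) • b) (closure A) (closure B)
            = (fun q : EuclideanSpace ℝ (Fin n) × EuclideanSpace ℝ (Fin n) =>
                p • q.1 + (1-p) • q.2) '' (closure A ×ˢ closure B) := (Set.image_prod _).symm
          _ = (fun q : EuclideanSpace ℝ (Fin n) × EuclideanSpace ℝ (Fin n) =>
                p • q.1 + (1-p) • q.2) '' closure (A ×ˢ B) := by rw [closure_prod_eq]
          _ ⊆ closure ((fun q : EuclideanSpace ℝ (Fin n) × EuclideanSpace ℝ (Fin n) =>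
                p • q.1 + (1-p) • q.2) '' (A ×ˢ B)) := image_closure_subset_closure_image hcont
          _ = closure (Set.image2 (fun a b => p • a + (1-p) • b) A B) :=
                congrArg closure (Set.image_prod fun a b => p • a + (1-p) • b)
          _ = C := by rw [himg, hCcp.isClosed.closure_eq]
      · rw [← himg]
        exact Set.image2_subset subset_closure subset_closure
    obtain ⟨hcA, hcB⟩ := hK (closure A) (closure B) hcAD hcAcp (hAcv.closure) hAne.closure
      hcBD hcBcp (hBcv.closure) hBne.closure p ⟨hp0, hp1⟩ himgc
    have hAC : A ⊆ C := hcA ▸ subset_closure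
    have hBC : B ⊆ C := hcB ▸ subset_closure
    constructor
    · refine Set.Subset.antisymm hAC ?_
      exact key_subset (finrank ℝ (vectorSpan ℝ C)) C A B hCcp hCcv hAC hAcv hBC
        p hp0 hp1 himg le_rfl
    · refine Set.Subset.antisymm hBC ?_
      have himg' : Set.image2 (fun b a => (1-p) • b + (1-(1-p)) • a) B A = C := by
        rw [Set.image2_swap, ← himg]
        exact Set.image2_congr fun a _ b _ => by rw [sub_sub_cancel]; exact add_comm _ _
      exact key_subset (finrank ℝ (vectorSpan ℝ C)) C B A hCcp hCcv hBC hBcv hAC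
        (1-p) (by linarith) (by linarith) himg' le_rfl
  · intro hPc A B hAD _ hAcv hAne hBD _ hBcv hBne p hp himg
    exact hPc A B hAD hAcv hAne hBD hBcv hBne p hp himg
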